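/- Let k ≥ 3 and let m,n ≥ 1 be integers with m+n = k. Let P(b,x) = Σ_{i=1}^{k−1} γ_i b^i x^{k−i} with γ_m = 1, and let f ∈ ℝ[[a,b,x]] be a nonzero formal power series all of whose monomials a^s b^i x^j have weighted order ks + i + j > k (weights: a ↦ k, b ↦ 1, x ↦ 1). Then the vector field χ = n b ∂_b − m x ∂_x is tangent to the hypersurface y = a + P(b,x) + f(a,b,x), i.e. n b ∂_b(P+f) = m x ∂_x(P+f) holds identically, if and only if P(b,x) = b^m x^n and every monomial a^s b^i x^j occurring in f satisfies n i = m j (so that, when gcd(m,n) = 1, the expansion of f with respect to b and x consists of monomials of the type (b^m x^n)^r). -/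

import Mathlib

/- Tangency of χ = n b ∂_b − m x ∂_x to the hypersurface y = a + P(b,x) + f.
   Formal series live in ℝ[[a,b,x]] = `MvPowerSeries (Fin 3) ℝ`
   (a ↦ 0, b ↦ 1, x ↦ 2). -/

open MvPowerSeries

/-- Formal partial derivative with respect to the variable `b` (index 1). -/
noncomputable def dB (g : MvPowerSeries (Fin 3) ℝ) : MvPowerSeries (Fin 3) ℝ :=
  fun d => ((d 1 : ℝ) + 1) * MvPowerSeries.coeff (R := ℝ) (d + Finsupp.single 1 1) g

/-- Formal partial derivative with respect to the variable `x` (index 2). -/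
noncomputable def dX (g : MvPowerSeries (Fin 3) ℝ) : MvPowerSeries (Fin 3) ℝ :=
  fun d => ((d 2 : ℝ) + 1) * MvPowerSeries.coeff (R := ℝ) (d + Finsupp.single 2 1) g

lemma coeff_X_mul_dB (g : MvPowerSeries (Fin 3) ℝ) (d : Fin 3 →₀ ℕ) :
    MvPowerSeries.coeff (R := ℝ) d ((X 1 : MvPowerSeries (Fin 3) ℝ) * dB g)
      = (d 1 : ℝ) * MvPowerSeries.coeff (R := ℝ) d g := by
  rw [X, coeff_monomial_mul]
  by_cases h : 1 ≤ d 1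
  · rw [if_pos (Finsupp.single_le_iff.mpr h), one_mul]
    set e : Fin 3 →₀ ℕ := d - Finsupp.single 1 1 with he
    have hsub : e + Finsupp.single 1 1 = d := by
      ext a
      simp only [he, Finsupp.add_apply, Finsupp.tsub_apply, Finsupp.single_apply]
      split_ifs with h' <;> [skip; omega]
      have : a = 1 := h'.symm
      subst this; omega
    have hc : MvPowerSeries.coeff (R := ℝ) e (dB g)
        = ((e 1 : ℝ) + 1) * MvPowerSeries.coeff (R := ℝ) (e + Finsupp.single 1 1) g := rfl
    rw [hc, hsub]
    have h2 : (e 1 : ℕ) = d 1 - 1 := by simp [he, Finsupp.tsub_apply]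
    rw [h2]
    congr 1
    push_cast [Nat.cast_sub h]
    ring
  · rw [if_neg (fun hle => h (Finsupp.single_le_iff.mp hle))]
    have hd1 : d 1 = 0 := by omega
    simp [hd1]

lemma coeff_X_mul_dX (g : MvPowerSeries (Fin 3) ℝ) (d : Fin 3 →₀ ℕ) :
    MvPowerSeries.coeff (R := ℝ) d ((X 2 : MvPowerSeries (Fin 3) ℝ) * dX g)
      = (d 2 : ℝ) * MvPowerSeries.coeff (R := ℝ) d g := by
  rw [X, coeff_monomial_mul]
  by_cases h : 1 ≤ d 2
  · rw [if_pos (Finsupp.single_le_iff.mpr h), one_mul]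
    set e : Fin 3 →₀ ℕ := d - Finsupp.single 2 1 with he
    have hsub : e + Finsupp.single 2 1 = d := by
      ext a
      simp only [he, Finsupp.add_apply, Finsupp.tsub_apply, Finsupp.single_apply]
      split_ifs with h' <;> [skip; omega]
      have : a = 2 := h'.symm
      subst this; omega
    have hc : MvPowerSeries.coeff (R := ℝ) e (dX g)
        = ((e 2 : ℝ) + 1) * MvPowerSeries.coeff (R := ℝ) (e + Finsupp.single 2 1) g := rfl
    rw [hc, hsub]
    have h2 : (e 2 : ℕ) = d 2 - 1 := by simp [he, Finsupp.tsub_apply]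
    rw [h2]
    congr 1
    push_cast [Nat.cast_sub h]
    ring
  · rw [if_neg (fun hle => h (Finsupp.single_le_iff.mp hle))]
    have hd2 : d 2 = 0 := by omega
    simp [hd2]

lemma app0 (i j : ℕ) :
    ((Finsupp.single (1 : Fin 3) i + Finsupp.single 2 j : Fin 3 →₀ ℕ)) 0 = 0 := by
  rw [Finsupp.add_apply, Finsupp.single_eq_of_ne (by decide),
    Finsupp.single_eq_of_ne (by decide), add_zero]

lemma app1 (i j : ℕ) :
    ((Finsupp.single (1 : Fin 3) i + Finsupp.single 2 j : Fin 3 →₀ ℕ)) 1 = i := by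
  rw [Finsupp.add_apply, Finsupp.single_eq_same,
    Finsupp.single_eq_of_ne (by decide), add_zero]

lemma app2 (i j : ℕ) :
    ((Finsupp.single (1 : Fin 3) i + Finsupp.single 2 j : Fin 3 →₀ ℕ)) 2 = j := by
  rw [Finsupp.add_apply, Finsupp.single_eq_same,
    Finsupp.single_eq_of_ne (by decide), zero_add]

/-- Let `k = m + n ≥ 3` with `m, n ≥ 1`, let `P = Σ_{i=1}^{k−1} γ_i b^i x^{k−i}`
with `γ_m = 1`, and let `f` be a nonzero formal power series all of whose
monomials `a^s b^i x^j` have weighted order `ks + i + j > k`.  Then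
`χ = n b ∂_b − m x ∂_x` is tangent to `y = a + P + f`, i.e.
`n·b·∂_b(P+f) = m·x·∂_x(P+f)`, if and only if `P = b^m x^n` and every monomial
`a^s b^i x^j` of `f` satisfies `n i = m j`. -/
theorem stmt9 (k m n : ℕ) (hk : 3 ≤ k) (hm : 1 ≤ m) (hn : 1 ≤ n)
    (hmn : m + n = k) (γ : ℕ → ℝ) (hγm : γ m = 1)
    (f : MvPowerSeries (Fin 3) ℝ) (hf0 : f ≠ 0)
    (hford : ∀ d, MvPowerSeries.coeff (R := ℝ) d f ≠ 0 → k < k * d 0 + d 1 + d 2) :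
    (let P : MvPowerSeries (Fin 3) ℝ :=
      ∑ i ∈ Finset.Icc 1 (k - 1),
        MvPowerSeries.monomial (R := ℝ) (Finsupp.single 1 i + Finsupp.single 2 (k - i)) (γ i)
     ((n : ℝ) • ((X 1 : MvPowerSeries (Fin 3) ℝ) * dB (P + f)) =
        (m : ℝ) • ((X 2 : MvPowerSeries (Fin 3) ℝ) * dX (P + f))) ↔
      (P = MvPowerSeries.monomial (R := ℝ) (Finsupp.single 1 m + Finsupp.single 2 n) 1 ∧
        ∀ d, MvPowerSeries.coeff (R := ℝ) d f ≠ 0 → n * d 1 = m * d 2)) := by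
  intro P
  have hk0 : 0 < k := by omega
  -- diagonal coefficients of P
  have hPd : ∀ i ∈ Finset.Icc 1 (k - 1),
      MvPowerSeries.coeff (R := ℝ) (Finsupp.single 1 i + Finsupp.single 2 (k - i)) P = γ i := by
    intro i hi
    have : MvPowerSeries.coeff (R := ℝ) (Finsupp.single 1 i + Finsupp.single 2 (k - i)) P
        = ∑ j ∈ Finset.Icc 1 (k - 1),
            if (Finsupp.single 1 i + Finsupp.single 2 (k - i) : Fin 3 →₀ ℕ)
              = Finsupp.single 1 j + Finsupp.single 2 (k - j) then γ j else 0 := by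
      rw [map_sum]
      refine Finset.sum_congr rfl fun j _ => ?_
      rw [coeff_monomial]
    rw [this, Finset.sum_eq_single_of_mem i hi]
    · simp
    · intro j hj hji
      rw [if_neg]
      intro hEq
      apply hji
      have := congrArg (fun v : Fin 3 →₀ ℕ => v 1) hEq
      simpa [Finsupp.single_apply] using this.symm
  -- support of P
  have hPsup : ∀ d, MvPowerSeries.coeff (R := ℝ) d P ≠ 0 →
      ∃ i ∈ Finset.Icc 1 (k - 1),
        d = Finsupp.single 1 i + Finsupp.single 2 (k - i) := by
    intro d hd
    rw [map_sum] at hd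
    obtain ⟨i, hi, hne⟩ := Finset.exists_ne_zero_of_sum_ne_zero hd
    rw [coeff_monomial] at hne
    by_cases hcase : d = Finsupp.single 1 i + Finsupp.single 2 (k - i)
    · exact ⟨i, hi, hcase⟩
    · rw [if_neg hcase] at hne
      exact absurd rfl hne
  -- weight of P's monomials is exactly k
  have hwt : ∀ i ∈ Finset.Icc 1 (k - 1),
      k * ((Finsupp.single 1 i + Finsupp.single 2 (k - i) : Fin 3 →₀ ℕ) 0)
        + ((Finsupp.single 1 i + Finsupp.single 2 (k - i) : Fin 3 →₀ ℕ) 1)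
        + ((Finsupp.single 1 i + Finsupp.single 2 (k - i) : Fin 3 →₀ ℕ) 2) = k := by
    intro i hi
    rw [Finset.mem_Icc] at hi
    rw [app0, app1, app2]
    omega
  -- f and P have disjoint supports
  have hfP : ∀ d, MvPowerSeries.coeff (R := ℝ) d f ≠ 0 → MvPowerSeries.coeff (R := ℝ) d P = 0 := by
    intro d hd
    by_contra hP
    obtain ⟨i, hi, rfl⟩ := hPsup d hP
    have := hford _ hd
    rw [hwt i hi] at this
    omega
  have hPf : ∀ i ∈ Finset.Icc 1 (k - 1),
      MvPowerSeries.coeff (R := ℝ) (Finsupp.single 1 i + Finsupp.single 2 (k - i)) f = 0 := by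
    intro i hi
    by_contra hd
    have := hford _ hd
    rw [hwt i hi] at this
    omega
  -- the key coefficientwise reformulation
  have key : ((n : ℝ) • ((X 1 : MvPowerSeries (Fin 3) ℝ) * dB (P + f)) =
        (m : ℝ) • ((X 2 : MvPowerSeries (Fin 3) ℝ) * dX (P + f))) ↔
      ∀ d : Fin 3 →₀ ℕ, (n : ℝ) * (d 1) * MvPowerSeries.coeff (R := ℝ) d (P + f)
        = (m : ℝ) * (d 2) * MvPowerSeries.coeff (R := ℝ) d (P + f) := by
    rw [MvPowerSeries.ext_iff]
    apply forall_congr'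
    intro d
    rw [MvPowerSeries.coeff_smul, MvPowerSeries.coeff_smul,
      coeff_X_mul_dB, coeff_X_mul_dX, ← mul_assoc, ← mul_assoc]
  rw [key]
  constructor
  · intro h
    constructor
    · -- P is the single monomial b^m x^n
      have hγ : ∀ i ∈ Finset.Icc 1 (k - 1), i ≠ m → γ i = 0 := by
        intro i hi him
        have hi' := Finset.mem_Icc.mp hi
        have hc : MvPowerSeries.coeff (R := ℝ) (Finsupp.single 1 i + Finsupp.single 2 (k - i)) (P + f)
            = γ i := by
          rw [map_add, hPd i hi, hPf i hi, add_zero]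
        have hd := h (Finsupp.single 1 i + Finsupp.single 2 (k - i))
        rw [hc] at hd
        rw [app1, app2] at hd
        by_contra hγi
        have hd' : (n : ℝ) * (i : ℕ) = (m : ℝ) * ((k - i : ℕ) : ℕ) :=
          mul_right_cancel₀ hγi hd
        have hnat : n * i = m * (k - i) := by exact_mod_cast hd'
        have h1 : n * i + m * i = m * k := by
          rw [hnat, ← Nat.mul_add, Nat.sub_add_cancel (by omega)]
        have h2 : k * i = k * m := by
          have hki : k * i = m * i + n * i := by rw [← hmn, Nat.add_mul]
          rw [hki, Nat.add_comm, h1, Nat.mul_comm]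
        exact him (Nat.eq_of_mul_eq_mul_left hk0 h2)
      have hmem : m ∈ Finset.Icc 1 (k - 1) := by
        rw [Finset.mem_Icc]; omega
      have : P = ∑ i ∈ Finset.Icc 1 (k - 1),
          MvPowerSeries.monomial (R := ℝ) (Finsupp.single 1 i + Finsupp.single 2 (k - i)) (γ i) := rfl
      have hkm : k - m = n := by omega
      rw [this, Finset.sum_eq_single_of_mem m hmem]
      · rw [hγm, hkm]
      · intro j hj hjm
        rw [hγ j hj hjm, map_zero]
    · -- the condition on f
      intro d hd
      have hc : MvPowerSeries.coeff (R := ℝ) d (P + f) = MvPowerSeries.coeff (R := ℝ) d f := by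
        rw [map_add, hfP d hd, zero_add]
      have hh := h d
      rw [hc] at hh
      exact_mod_cast mul_right_cancel₀ hd hh
  · rintro ⟨hP, hfc⟩ d
    by_cases hc : MvPowerSeries.coeff (R := ℝ) d (P + f) = 0
    · rw [hc]; ring
    · rw [map_add] at hc
      have : MvPowerSeries.coeff (R := ℝ) d P ≠ 0 ∨ MvPowerSeries.coeff (R := ℝ) d f ≠ 0 := by
        by_contra hcon
        push_neg at hcon
        rw [hcon.1, hcon.2, add_zero] at hc
        exact hc rfl
      have hnd : (n : ℝ) * (d 1) = (m : ℝ) * (d 2) := by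
        rcases this with hp | hf
        · rw [hP, coeff_monomial] at hp
          have hde : d = Finsupp.single 1 m + Finsupp.single 2 n := by
            by_contra hne
            simp [hne] at hp
          rw [hde, app1, app2]
          ring
        · exact_mod_cast hfc d hf
      rw [mul_assoc, mul_assoc, ← mul_assoc (n:ℝ), ← mul_assoc (m:ℝ), hnd]
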